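/- Let K be a field of characteristic zero and let D = ∂_{x_1} + (a_2·x_2 + b_2)·∂_{x_2} + b_3·∂_{x_3} be the K-derivation of K[x_1,x_2,x_3] with a_2, b_2 ∈ K[x_1] and b_3 ∈ K[x_1,x_2]. Write b_3 = b_3^{(v)}·x_2^v + ⋯ + b_3^{(1)}·x_2 + b_3^{(0)} with each b_3^{(j)} ∈ K[x_1] and b_3^{(v)} ≠ 0 (so v = deg_{x_2} b_3). If deg a_2 > deg b_3^{(v)} (degrees in x_1), then x_2^{v+1} does not belong to Im D = D(K[x_1,x_2,x_3]); that is, there is no f ∈ K[x_1,x_2,x_3] with D(f) = x_2^{v+1}. -/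

import Mathlib

set_option linter.unusedSectionVars false

open MvPolynomial

noncomputable section
namespace St18

/-- Apply a map to all coefficients of a polynomial. -/
def capp {R : Type*} [Semiring R] (σ : R → R) (h : σ 0 = 0) (p : Polynomial R) : Polynomial R :=
  ⟨⟨p.toFinsupp.coeff.mapRange σ h⟩⟩

theorem coeff_capp {R : Type*} [Semiring R] (σ : R → R) (h : σ 0 = 0) (p : Polynomial R)
    (n : ℕ) : (capp σ h p).coeff n = σ (p.coeff n) := by
  rcases p with ⟨f⟩
  simp [capp, Polynomial.coeff_ofFinsupp, Finsupp.mapRange_apply]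

theorem capp_C {R : Type*} [Semiring R] (σ : R → R) (h : σ 0 = 0) (a : R) :
    capp σ h (Polynomial.C a) = Polynomial.C (σ a) := by
  ext n : 1
  rw [coeff_capp]
  simp only [Polynomial.coeff_C]
  split <;> simp [h]

theorem capp_add {R : Type*} [Semiring R] (σ : R → R) (h : σ 0 = 0)
    (hadd : ∀ x y, σ (x + y) = σ x + σ y) (p q : Polynomial R) :
    capp σ h (p + q) = capp σ h p + capp σ h q := by
  ext n : 1
  rw [Polynomial.coeff_add, coeff_capp, coeff_capp, coeff_capp, Polynomial.coeff_add, hadd]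

theorem capp_mul_X {R : Type*} [Semiring R] (σ : R → R) (h : σ 0 = 0) (p : Polynomial R) :
    capp σ h (p * Polynomial.X) = capp σ h p * Polynomial.X := by
  ext n : 1
  cases n with
  | zero => rw [coeff_capp, Polynomial.coeff_mul_X_zero, Polynomial.coeff_mul_X_zero, h]
  | succ m => rw [coeff_capp, Polynomial.coeff_mul_X, Polynomial.coeff_mul_X, coeff_capp]

variable {K : Type*} [Field K] [CharZero K]

local notation "T" => Polynomial K
local notation "S" => Polynomial (Polynomial K)
local notation "pC" => Polynomial.C
local notation "pX" => Polynomial.X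

theorem capp_mul_C (p : S) (t : T) :
    capp (fun t => Polynomial.derivative t) (by simp) (p * pC t)
      = capp (fun t => Polynomial.derivative t) (by simp) p * pC t
        + p * pC (Polynomial.derivative t) := by
  ext n : 1
  rw [Polynomial.coeff_add, coeff_capp, Polynomial.coeff_mul_C, Polynomial.coeff_mul_C,
    Polynomial.coeff_mul_C, coeff_capp, Polynomial.derivative_mul]

/-- The derivation `∂ₓ + (α y + β) ∂_y` on `K[x][y]`. -/
def D0 (α β : T) (s : S) : S :=
  capp (fun t => Polynomial.derivative t) (by simp) s
    + (pC α * pX + pC β) * Polynomial.derivative s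

theorem coeffD0 (α β : T) (s : S) (n : ℕ) :
    (D0 α β s).coeff n = Polynomial.derivative (s.coeff n) + α * (s.coeff n * (n : T))
      + β * (s.coeff (n + 1) * ((n + 1 : ℕ) : T)) := by
  rw [D0, Polynomial.coeff_add, coeff_capp, add_mul, Polynomial.coeff_add, mul_assoc,
    Polynomial.coeff_C_mul, Polynomial.coeff_C_mul, Polynomial.coeff_derivative]
  cases n with
  | zero =>
      rw [mul_comm pX, Polynomial.coeff_mul_X_zero]
      push_cast
      ring
  | succ m =>
      rw [mul_comm pX, Polynomial.coeff_mul_X, Polynomial.coeff_derivative]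
      push_cast
      ring

theorem D0_zero (α β : T) : D0 α β 0 = 0 := by
  ext n : 1
  rw [coeffD0]
  simp

theorem D0_add (α β : T) (s t : S) : D0 α β (s + t) = D0 α β s + D0 α β t := by
  rw [D0, D0, D0, capp_add _ _ (by intro x y; simp), Polynomial.derivative_add]
  ring

theorem D0_CC (α β : T) (a : K) : D0 α β (pC (pC a)) = 0 := by
  rw [D0, capp_C]
  simp

theorem D0_mul_X (α β : T) (u : S) :
    D0 α β (u * pX) = D0 α β u * pX + (pC α * pX + pC β) * u := by
  rw [D0, D0, capp_mul_X, Polynomial.derivative_mul, Polynomial.derivative_X]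
  ring

theorem D0_mul_CX (α β : T) (u : S) :
    D0 α β (u * pC pX) = D0 α β u * pC pX + u := by
  rw [D0, D0, capp_mul_C, Polynomial.derivative_mul, Polynomial.derivative_C,
    Polynomial.derivative_X, Polynomial.C_1]
  ring


theorem top_natDegree (α g : T) (hα : 1 ≤ α.natDegree) (hg : g ≠ 0) (n : ℕ) (hn : n ≠ 0) :
    (Polynomial.derivative g + α * (g * (n : T))).natDegree = α.natDegree + g.natDegree := by
  have hα0 : α ≠ 0 := fun h => by simp [h] at hα
  have hn' : ((n : T)) ≠ 0 := by exact_mod_cast Nat.cast_ne_zero.2 hn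
  have hgn : g * (n : T) ≠ 0 := mul_ne_zero hg hn'
  have hmul : α * (g * (n : T)) ≠ 0 := mul_ne_zero hα0 hgn
  have hlt : (Polynomial.derivative g).degree < (α * (g * (n : T))).degree := by
    calc (Polynomial.derivative g).degree < g.degree := Polynomial.degree_derivative_lt hg
    _ ≤ (g * (n : T)).degree := Polynomial.degree_le_mul_left g hn'
    _ ≤ ((g * (n : T)) * α).degree := Polynomial.degree_le_mul_left _ hα0
    _ = (α * (g * (n : T))).degree := by rw [mul_comm]
  have hdeg := Polynomial.degree_add_eq_right_of_degree_lt hlt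
  rw [Polynomial.natDegree_eq_of_degree_eq hdeg, Polynomial.natDegree_mul hα0 hgn,
    Polynomial.natDegree_mul hg hn', Polynomial.natDegree_natCast, add_zero]

/-- `b₃` as a polynomial in `K[x][y]`. -/
def B3 (v : ℕ) (tt : ℕ → T) : S :=
  ∑ j ∈ Finset.range (v + 1), Polynomial.C (tt j) * Polynomial.X ^ j

theorem coeff_B3 (v : ℕ) (tt : ℕ → T) (n : ℕ) :
    (B3 v tt).coeff n = if n ≤ v then tt n else 0 := by
  rw [B3, Polynomial.finset_sum_coeff]
  simp only [Polynomial.coeff_C_mul, Polynomial.coeff_X_pow, mul_ite, mul_one, mul_zero]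
  rw [Finset.sum_ite_eq (Finset.range (v + 1)) n tt]
  simp [Nat.lt_succ_iff]

theorem natDegree_B3_le (v : ℕ) (tt : ℕ → T) : (B3 v tt).natDegree ≤ v := by
  rw [Polynomial.natDegree_le_iff_coeff_eq_zero]
  intro m hm
  rw [coeff_B3]
  simp [Nat.not_le.2 hm]

theorem step (α β : T) (v : ℕ) (tt : ℕ → T) (htv : tt v ≠ 0)
    (hdeg : (tt v).natDegree < α.natDegree) (s u : S)
    (hu : u.natDegree = 0 ∧ (1 ≤ v → ∃ k : K, u = pC (pC k)))
    (m : ℕ) (hm : m ≠ 0)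
    (heq : D0 α β s + B3 v tt * (u * ((m : ℕ) : S)) = 0) :
    s.natDegree = 0 ∧ (1 ≤ v → ∃ k : K, s = pC (pC k)) := by
  have hα1 : 1 ≤ α.natDegree := by omega
  have hmK : ((m : ℕ) : K) ≠ 0 := Nat.cast_ne_zero.2 hm
  have htopfact : ∀ d : ℕ, 1 ≤ d → d = s.natDegree →
      (D0 α β s).coeff d = Polynomial.derivative (s.coeff d) + α * (s.coeff d * (d : T)) ∧
      (Polynomial.derivative (s.coeff d) + α * (s.coeff d * (d : T))).natDegree
        = α.natDegree + (s.coeff d).natDegree := by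
    intro d hd1 hdd
    have hs0 : s ≠ 0 := by intro h; rw [h] at hdd; simp at hdd; omega
    have hg : s.coeff d ≠ 0 := by
      rw [hdd, ← Polynomial.leadingCoeff]; exact Polynomial.leadingCoeff_ne_zero.2 hs0
    constructor
    · rw [coeffD0,
        Polynomial.coeff_eq_zero_of_natDegree_lt (show s.natDegree < d + 1 by omega)]
      simp
    · exact top_natDegree α (s.coeff d) hα1 hg d (by omega)
  rcases Nat.eq_zero_or_pos v with hv0 | hv1
  · -- v = 0 case
    subst hv0
    refine ⟨?_, fun h => absurd h (by omega)⟩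
    by_contra hd0
    have hd1 : 1 ≤ s.natDegree := by omega
    obtain ⟨hc, hnd⟩ := htopfact s.natDegree hd1 rfl
    obtain ⟨u0, hu'⟩ : ∃ u0, u = pC u0 := ⟨u.coeff 0, Polynomial.eq_C_of_natDegree_eq_zero hu.1⟩
    have hjunk : B3 0 tt * (u * ((m : ℕ) : S))
        = pC (tt 0 * (u0 * ((m : ℕ) : T))) := by
      rw [B3, Finset.sum_range_one, pow_zero, mul_one, hu']
      rw [show ((m : ℕ) : S) = pC ((m : ℕ) : T) from (map_natCast pC m).symm]
      rw [← map_mul, ← map_mul]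
    have h := congrArg (fun p => Polynomial.coeff p s.natDegree) heq
    simp only [Polynomial.coeff_add, hjunk, Polynomial.coeff_zero] at h
    rw [hc, Polynomial.coeff_C, if_neg (by omega), add_zero] at h
    rw [h] at hnd
    simp at hnd
    omega
  · -- v ≥ 1 case
    obtain ⟨k, rfl⟩ := hu.2 hv1
    set w : K := k * ((m : ℕ) : K) with hw
    have hjunk : pC (pC k) * ((m : ℕ) : S) = pC (pC w) := by
      rw [show ((m : ℕ) : S) = pC (pC ((m : ℕ) : K)) from
        by rw [map_natCast, map_natCast], ← map_mul, ← map_mul]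
    rw [hjunk] at heq
    have hco : ∀ n, (D0 α β s).coeff n + (B3 v tt).coeff n * pC w = 0 := by
      intro n
      have h := congrArg (fun p => Polynomial.coeff p n) heq
      simpa [Polynomial.coeff_add, Polynomial.coeff_mul_C] using h
    by_cases hd0 : s.natDegree = 0
    · -- get w = 0
      have h := hco v
      rw [coeffD0,
        Polynomial.coeff_eq_zero_of_natDegree_lt (show s.natDegree < v by omega),
        Polynomial.coeff_eq_zero_of_natDegree_lt (show s.natDegree < v + 1 by omega),
        coeff_B3, if_pos le_rfl] at h
      simp only [map_zero, zero_mul, mul_zero, add_zero, zero_add] at h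
      have hw0 : w = 0 := by
        rcases mul_eq_zero.1 h with h' | h'
        · exact absurd h' htv
        · exact_mod_cast Polynomial.C_eq_zero.1 h'
      rw [hw0] at heq
      simp only [map_zero, mul_zero, add_zero] at heq
      -- now D0 s = 0
      have h0 := congrArg (fun p => Polynomial.coeff p 0) heq
      simp only [Polynomial.coeff_zero] at h0
      rw [coeffD0,
        Polynomial.coeff_eq_zero_of_natDegree_lt (show s.natDegree < 0 + 1 by omega)] at h0
      simp only [Nat.cast_zero, mul_zero, zero_mul, add_zero, zero_add, map_zero] at h0
      have hdz : (s.coeff 0).natDegree = 0 :=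
        Polynomial.natDegree_eq_zero_of_derivative_eq_zero h0
      refine ⟨hd0, fun _ => ⟨(s.coeff 0).coeff 0, ?_⟩⟩
      exact (Polynomial.eq_C_of_natDegree_eq_zero hd0).trans
        (congrArg pC (Polynomial.eq_C_of_natDegree_eq_zero hdz))
    · exfalso
      have hd1 : 1 ≤ s.natDegree := by omega
      obtain ⟨hc, hnd⟩ := htopfact s.natDegree hd1 rfl
      rcases lt_trichotomy s.natDegree v with h | h | h
      · -- d < v : first w = 0 from coeff v, then top = 0
        have h1 := hco v
        rw [coeffD0,
          Polynomial.coeff_eq_zero_of_natDegree_lt (show s.natDegree < v by omega),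
          Polynomial.coeff_eq_zero_of_natDegree_lt (show s.natDegree < v + 1 by omega),
          coeff_B3, if_pos le_rfl] at h1
        simp only [map_zero, zero_mul, mul_zero, add_zero, zero_add] at h1
        have hw0 : pC w = 0 := by
          rcases mul_eq_zero.1 h1 with h' | h'
          · exact absurd h' htv
          · exact h'
        have h2 := hco s.natDegree
        rw [hc, hw0, mul_zero, add_zero] at h2
        rw [h2] at hnd
        simp at hnd
        omega
      · -- d = v : natDegree comparison
        rw [h] at hc hnd
        have h2 := hco v
        rw [hc, coeff_B3, if_pos le_rfl] at h2
        have h3 : Polynomial.derivative (s.coeff v) + α * (s.coeff v * (v : T))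
            = -(tt v * pC w) := by linear_combination h2
        have h4 : (-(tt v * pC w)).natDegree ≤ (tt v).natDegree := by
          rw [Polynomial.natDegree_neg]
          calc (tt v * pC w).natDegree ≤ (tt v).natDegree + (pC w).natDegree :=
                Polynomial.natDegree_mul_le
          _ ≤ (tt v).natDegree := by simp [Polynomial.natDegree_C]
        rw [h3] at hnd
        omega
      · -- d > v : top = 0
        have h2 := hco s.natDegree
        rw [hc, coeff_B3, if_neg (by omega), zero_mul, add_zero] at h2
        rw [h2] at hnd
        simp at hnd
        omega

theorem main (α β : T) (v : ℕ) (hα1 : 1 ≤ α.natDegree) (s r : S) (hr : r.natDegree ≤ v)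
    (heq : D0 α β s + r = Polynomial.X ^ (v + 1)) : False := by
  have hco : ∀ n, (D0 α β s).coeff n + r.coeff n = ((Polynomial.X : S) ^ (v+1)).coeff n := by
    intro n
    have h := congrArg (fun p => Polynomial.coeff p n) heq
    simpa [Polynomial.coeff_add] using h
  by_cases hd : s.natDegree ≤ v
  · have h1 := hco (v + 1)
    rw [coeffD0,
      Polynomial.coeff_eq_zero_of_natDegree_lt (show s.natDegree < v + 1 by omega),
      Polynomial.coeff_eq_zero_of_natDegree_lt (show s.natDegree < v + 1 + 1 by omega),
      Polynomial.coeff_eq_zero_of_natDegree_lt (show r.natDegree < v + 1 by omega),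
      Polynomial.coeff_X_pow, if_pos rfl] at h1
    simp at h1
  · push_neg at hd
    have hs0 : s ≠ 0 := by intro h; rw [h] at hd; simp at hd
    have hg : s.coeff s.natDegree ≠ 0 := by
      rw [← Polynomial.leadingCoeff]; exact Polynomial.leadingCoeff_ne_zero.2 hs0
    have hnd := top_natDegree α (s.coeff s.natDegree) hα1 hg s.natDegree (by omega)
    have h1 := hco s.natDegree
    rw [coeffD0,
      Polynomial.coeff_eq_zero_of_natDegree_lt (show s.natDegree < s.natDegree + 1 by omega),
      Polynomial.coeff_eq_zero_of_natDegree_lt (show r.natDegree < s.natDegree by omega),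
      Polynomial.coeff_X_pow] at h1
    simp only [mul_zero, zero_mul, add_zero] at h1
    by_cases hdv : s.natDegree = v + 1
    · rw [if_pos hdv] at h1
      rw [h1] at hnd
      simp at hnd
      omega
    · rw [if_neg hdv] at h1
      rw [h1] at hnd
      simp at hnd
      omega

theorem final (α β : T) (v : ℕ) (tt : ℕ → T) (htv : tt v ≠ 0)
    (hdeg : (tt v).natDegree < α.natDegree) (F : Polynomial S)
    (hF : ∀ n : ℕ, D0 α β (F.coeff n) + B3 v tt * (F.coeff (n + 1) * ((n + 1 : ℕ) : S))
      = if n = 0 then Polynomial.X ^ (v + 1) else 0) : False := by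
  have hα1 : 1 ≤ α.natDegree := by omega
  have key : ∀ j n : ℕ, 1 ≤ n → F.natDegree + 1 ≤ n + j →
      (F.coeff n).natDegree = 0 ∧ (1 ≤ v → ∃ k : K, F.coeff n = pC (pC k)) := by
    intro j
    induction j with
    | zero =>
        intro n h1 hle
        have hz : F.coeff n = 0 := Polynomial.coeff_eq_zero_of_natDegree_lt (by omega)
        rw [hz]
        exact ⟨Polynomial.natDegree_zero, fun _ => ⟨0, by simp⟩⟩
    | succ j ih =>
        intro n h1 hle
        by_cases hbig : F.natDegree + 1 ≤ n
        · have hz : F.coeff n = 0 := Polynomial.coeff_eq_zero_of_natDegree_lt (by omega)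
          rw [hz]
          exact ⟨Polynomial.natDegree_zero, fun _ => ⟨0, by simp⟩⟩
        · have hn := ih (n + 1) (by omega) (by omega)
          have heq := hF n
          rw [if_neg (by omega)] at heq
          exact step α β v tt htv hdeg _ _ hn (n + 1) (by omega) heq
  have h1 := key (F.natDegree + 1) 1 le_rfl (by omega)
  have heq0 := hF 0
  rw [if_pos rfl] at heq0
  refine main α β v hα1 (F.coeff 0) _ ?_ heq0
  calc (B3 v tt * (F.coeff 1 * ((0 + 1 : ℕ) : S))).natDegree
      ≤ (B3 v tt).natDegree + (F.coeff 1 * ((0 + 1 : ℕ) : S)).natDegree :=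
        Polynomial.natDegree_mul_le
    _ ≤ v := by
        have hone : ((0 + 1 : ℕ) : S) = 1 := by norm_num
        rw [hone, mul_one, h1.1, add_zero]
        exact natDegree_B3_le v tt

local notation "A'" => Polynomial (Polynomial (Polynomial K))

/-- The full derivation on `K[x][y][z]`. -/
def DA (α β : T) (v : ℕ) (tt : ℕ → T) (F : A') : A' :=
  capp (D0 α β) (D0_zero α β) F + pC (B3 v tt) * Polynomial.derivative F

theorem DA_add (α β : T) (v : ℕ) (tt : ℕ → T) (F G : A') :
    DA α β v tt (F + G) = DA α β v tt F + DA α β v tt G := by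
  rw [DA, DA, DA, capp_add _ _ (D0_add α β), Polynomial.derivative_add]
  ring

theorem DA_CCC (α β : T) (v : ℕ) (tt : ℕ → T) (a : K) :
    DA α β v tt (pC (pC (pC a))) = 0 := by
  rw [DA, capp_C, D0_CC]
  simp

theorem DA_mul_X (α β : T) (v : ℕ) (tt : ℕ → T) (F : A') :
    DA α β v tt (F * Polynomial.X) = DA α β v tt F * Polynomial.X + pC (B3 v tt) * F := by
  rw [DA, DA, capp_mul_X, Polynomial.derivative_mul, Polynomial.derivative_X]
  ring

theorem DA_mul_CX (α β : T) (v : ℕ) (tt : ℕ → T) (F : A') :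
    DA α β v tt (F * pC Polynomial.X)
      = DA α β v tt F * pC Polynomial.X + pC (pC α * Polynomial.X + pC β) * F := by
  have hcapp : capp (D0 α β) (D0_zero α β) (F * pC Polynomial.X)
      = capp (D0 α β) (D0_zero α β) F * pC Polynomial.X
        + pC (pC α * Polynomial.X + pC β) * F := by
    ext n : 1
    rw [Polynomial.coeff_add, coeff_capp, Polynomial.coeff_mul_C, Polynomial.coeff_mul_C,
      Polynomial.coeff_C_mul, coeff_capp, D0_mul_X]
  rw [DA, DA, hcapp, Polynomial.derivative_mul, Polynomial.derivative_C]
  ring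

theorem DA_mul_CCX (α β : T) (v : ℕ) (tt : ℕ → T) (F : A') :
    DA α β v tt (F * pC (pC Polynomial.X))
      = DA α β v tt F * pC (pC Polynomial.X) + F := by
  have hcapp : capp (D0 α β) (D0_zero α β) (F * pC (pC Polynomial.X))
      = capp (D0 α β) (D0_zero α β) F * pC (pC Polynomial.X) + F := by
    ext n : 1
    rw [Polynomial.coeff_add, coeff_capp, Polynomial.coeff_mul_C, Polynomial.coeff_mul_C,
      coeff_capp, D0_mul_CX]
  rw [DA, DA, hcapp, Polynomial.derivative_mul, Polynomial.derivative_C]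
  ring

/-! ### MvPolynomial glue -/

local notation "R3" => MvPolynomial (Fin 3) K

/-- Inclusion `K[x] → K[x₁,x₂,x₃]`. -/
def iota : Polynomial K →ₐ[K] R3 := Polynomial.aeval (MvPolynomial.X 0)

/-- Projection killing `x₂, x₃`. -/
def psi : R3 →ₐ[K] Polynomial K := MvPolynomial.aeval ![Polynomial.X, 0, 0]

theorem iota_psi (p : R3) (hp : p ∈ supported K ({0} : Set (Fin 3))) :
    iota (psi p) = p := by
  have hp' : p ∈ Algebra.adjoin K (MvPolynomial.X '' ({0} : Set (Fin 3)) :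
      Set R3) := hp
  clear hp
  induction hp' using Algebra.adjoin_induction with
  | mem x hx =>
      obtain ⟨i, hi, rfl⟩ := hx
      rcases hi with rfl
      simp [iota, psi]
  | algebraMap r => simp [iota, psi]
  | add x y _ _ hx hy => rw [map_add, map_add, hx, hy]
  | mul x y _ _ hx hy => rw [map_mul, map_mul, hx, hy]

theorem degreeOf_iota (q : Polynomial K) :
    degreeOf (0 : Fin 3) (iota q) = q.natDegree := by
  have hform : iota q = ∑ i ∈ q.support, monomial (Finsupp.single (0 : Fin 3) i) (q.coeff i) := by
    rw [iota, Polynomial.aeval_def, Polynomial.eval₂_eq_sum, Polynomial.sum]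
    refine Finset.sum_congr rfl fun i _ => ?_
    rw [← MvPolynomial.C_mul_X_pow_eq_monomial, MvPolynomial.algebraMap_eq]
  have hcoeff : ∀ m : Fin 3 →₀ ℕ, MvPolynomial.coeff m (iota q) ≠ 0 →
      ∃ i ∈ q.support, Finsupp.single (0 : Fin 3) i = m := by
    intro m hm
    rw [hform, MvPolynomial.coeff_sum] at hm
    obtain ⟨i, hi, hne⟩ := Finset.exists_ne_zero_of_sum_ne_zero hm
    rw [MvPolynomial.coeff_monomial] at hne
    rcases eq_or_ne (Finsupp.single (0 : Fin 3) i) m with h | h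
    · exact ⟨i, hi, h⟩
    · rw [if_neg h] at hne; exact absurd rfl hne
  apply le_antisymm
  · rw [MvPolynomial.degreeOf_eq_sup]
    apply Finset.sup_le
    intro m hm
    rw [MvPolynomial.mem_support_iff] at hm
    obtain ⟨i, hi, rfl⟩ := hcoeff m hm
    rw [Finsupp.single_eq_same]
    exact Polynomial.le_natDegree_of_ne_zero (Polynomial.mem_support_iff.1 hi)
  · rcases eq_or_ne q 0 with rfl | hq
    · simp
    · have hlead : MvPolynomial.coeff (Finsupp.single (0 : Fin 3) q.natDegree) (iota q)
          = q.coeff q.natDegree := by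
        rw [hform, MvPolynomial.coeff_sum]
        rw [Finset.sum_eq_single q.natDegree]
        · rw [MvPolynomial.coeff_monomial, if_pos rfl]
        · intro i _ hne
          rw [MvPolynomial.coeff_monomial, if_neg fun h => hne (Finsupp.single_injective _ h)]
        · intro h
          rw [MvPolynomial.coeff_monomial, if_pos rfl]
          exact Polynomial.notMem_support_iff.1 h
      have hne : MvPolynomial.coeff (Finsupp.single (0 : Fin 3) q.natDegree) (iota q) ≠ 0 := by
        rw [hlead]
        exact fun h => hq (Polynomial.leadingCoeff_eq_zero.1 h)
      rw [MvPolynomial.degreeOf_eq_sup]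
      have : Finsupp.single (0 : Fin 3) q.natDegree ∈ (iota q).support :=
        MvPolynomial.mem_support_iff.2 hne
      calc q.natDegree = Finsupp.single (0 : Fin 3) q.natDegree 0 :=
            (Finsupp.single_eq_same).symm
      _ ≤ _ := Finset.le_sup (f := fun m => m 0) this

/-- The standard isomorphism `K[x₁,x₂,x₃] → K[x][y][z]` (as an `AlgHom`). -/
def phi : R3 →ₐ[K] A' :=
  MvPolynomial.aeval (![pC (pC Polynomial.X), pC Polynomial.X, Polynomial.X] : Fin 3 → A')

theorem phi_X0 : phi (MvPolynomial.X (0 : Fin 3)) = (pC (pC Polynomial.X) : A') := by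
  simp [phi]

theorem phi_X1 : phi (MvPolynomial.X (1 : Fin 3)) = (pC Polynomial.X : A') := by
  simp [phi]

theorem phi_X2 : phi (MvPolynomial.X (2 : Fin 3)) = (Polynomial.X : A') := by
  simp [phi]

theorem phi_iota (q : T) : phi (iota q) = pC (pC q) := by
  have h : (phi.comp iota : Polynomial K →ₐ[K] A')
      = (Polynomial.CAlgHom.comp Polynomial.CAlgHom : Polynomial K →ₐ[K] A') := by
    apply Polynomial.algHom_ext
    simp [iota, phi, Polynomial.CAlgHom_apply]
  have := AlgHom.congr_fun h q
  simpa [Polynomial.CAlgHom_apply] using this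

theorem master (α β : T) (v : ℕ) (tt : ℕ → T)
    (D : Derivation K R3 R3)
    (h0 : D (MvPolynomial.X 0) = 1)
    (h1 : phi (D (MvPolynomial.X 1)) = pC (pC α * Polynomial.X + pC β))
    (h2 : phi (D (MvPolynomial.X 2)) = pC (B3 v tt))
    (f : R3) : phi (D f) = DA α β v tt (phi f) := by
  induction f using MvPolynomial.induction_on with
  | C a =>
      rw [show (MvPolynomial.C a : R3) = algebraMap K R3 a from
        (MvPolynomial.algebraMap_eq K (Fin 3)).symm ▸ rfl]
      rw [Derivation.map_algebraMap, map_zero, AlgHom.commutes]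
      have : (algebraMap K A' a) = pC (pC (pC a)) := by
        rw [Polynomial.algebraMap_apply, Polynomial.algebraMap_apply,
          Polynomial.algebraMap_apply]
        rfl
      rw [this, DA_CCC]
  | add p q hp hq => rw [map_add, map_add, map_add, hp, hq, DA_add]
  | mul_X p j hp =>
      have hleib : D (p * MvPolynomial.X j)
          = p * D (MvPolynomial.X j) + MvPolynomial.X j * D p := by
        rw [D.leibniz]
        rw [smul_eq_mul, smul_eq_mul]
      rw [hleib, map_add, map_mul, map_mul, hp]
      have hj : j = 0 ∨ j = 1 ∨ j = 2 := by fin_cases j <;> decide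
      rcases hj with rfl | rfl | rfl
      · rw [h0, map_one, mul_one, phi_X0, map_mul, phi_X0, DA_mul_CCX]
        ring
      · rw [h1, phi_X1, map_mul, phi_X1, DA_mul_CX]
        ring
      · rw [h2, phi_X2, map_mul, phi_X2, DA_mul_X]
        ring

end St18
end

/-- A `K`-subspace `M` of `R` is a Mathieu–Zhao space if for all `a, b ∈ R` such that
`a ^ m ∈ M` for all `m ≥ 1`, there exists `N` such that `b * a ^ m ∈ M` for all `m ≥ N`. -/
def IsMathieuZhao (K : Type*) {R : Type*} [Field K] [CommRing R] [Algebra K R]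
    (M : Submodule K R) : Prop :=
  ∀ a b : R, (∀ m : ℕ, 1 ≤ m → a ^ m ∈ M) →
    ∃ N : ℕ, ∀ m : ℕ, N ≤ m → b * a ^ m ∈ M

/-- A `K`-derivation `D` of `R` is simple if the only ideals `I` of `R` with `D(I) ⊆ I`
are `0` and `R`. -/
def Derivation.IsSimple {K R : Type*} [CommRing K] [CommRing R] [Algebra K R]
    (D : Derivation K R R) : Prop :=
  ∀ I : Ideal R, (∀ a ∈ I, D a ∈ I) → I = ⊥ ∨ I = ⊤

/-- For `D = ∂_{x₁} + (a₂ x₂ + b₂) ∂_{x₂} + b₃ ∂_{x₃}` with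
`a₂, b₂ ∈ K[x₁]` and `b₃ = Σ_{j=0}^{v} b₃⁽ʲ⁾ x₂^j` where each `b₃⁽ʲ⁾ ∈ K[x₁]` and
`b₃⁽ᵛ⁾ ≠ 0`: if `deg_{x₁} a₂ > deg_{x₁} b₃⁽ᵛ⁾`, then `x₂^(v+1) ∉ Im D`. -/
theorem statement18 (K : Type*) [Field K] [CharZero K]
    (a2 b2 b3 : MvPolynomial (Fin 3) K)
    (ha2 : a2 ∈ supported K ({0} : Set (Fin 3)))
    (hb2 : b2 ∈ supported K ({0} : Set (Fin 3)))
    (v : ℕ) (b3c : ℕ → MvPolynomial (Fin 3) K)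
    (hb3c : ∀ j : ℕ, b3c j ∈ supported K ({0} : Set (Fin 3)))
    (hb3 : b3 = ∑ j ∈ Finset.range (v + 1), b3c j * X 1 ^ j)
    (hb3v : b3c v ≠ 0)
    (D : Derivation K (MvPolynomial (Fin 3) K) (MvPolynomial (Fin 3) K))
    (hD1 : D (X 0) = 1)
    (hD2 : D (X 1) = a2 * X 1 + b2)
    (hD3 : D (X 2) = b3)
    (hdeg : degreeOf (0 : Fin 3) (b3c v) < degreeOf (0 : Fin 3) a2) :
    ¬ ∃ f : MvPolynomial (Fin 3) K, D f = X 1 ^ (v + 1) := by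
  rintro ⟨f, hf⟩
  set α : Polynomial K := St18.psi a2 with hα
  set β : Polynomial K := St18.psi b2 with hβ
  set tt : ℕ → Polynomial K := fun j => St18.psi (b3c j) with htt
  have ha2' : St18.iota α = a2 := St18.iota_psi a2 ha2
  have hb2' : St18.iota β = b2 := St18.iota_psi b2 hb2
  have hb3c' : ∀ j, St18.iota (tt j) = b3c j := fun j => St18.iota_psi (b3c j) (hb3c j)
  have htv : tt v ≠ 0 := by
    intro h
    apply hb3v
    rw [← hb3c' v, h, map_zero]
  have hdeg' : (tt v).natDegree < α.natDegree := by
    have e1 : degreeOf (0 : Fin 3) (St18.iota (tt v)) = (tt v).natDegree :=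
      St18.degreeOf_iota (tt v)
    have e2 : degreeOf (0 : Fin 3) (St18.iota α) = α.natDegree := St18.degreeOf_iota α
    rw [hb3c' v] at e1
    rw [ha2'] at e2
    omega
  -- the three generator values, transported through phi
  have h1 : St18.phi (D (X 1))
      = Polynomial.C (Polynomial.C α * Polynomial.X + Polynomial.C β) := by
    rw [hD2, map_add, map_mul, ← ha2', ← hb2', St18.phi_iota, St18.phi_iota, St18.phi_X1,
      map_add, map_mul]
  have h2 : St18.phi (D (X 2)) = Polynomial.C (St18.B3 v tt) := by
    rw [hD3, hb3, map_sum, St18.B3, map_sum]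
    refine Finset.sum_congr rfl fun j _ => ?_
    rw [map_mul, map_pow, St18.phi_X1, ← hb3c' j, St18.phi_iota, map_mul, map_pow]
  have hmaster := St18.master α β v tt D hD1 h1 h2 f
  rw [hf, map_pow, St18.phi_X1, ← map_pow] at hmaster
  set F : Polynomial (Polynomial (Polynomial K)) := St18.phi f with hF
  -- coefficient extraction
  have hFn : ∀ n : ℕ, St18.D0 α β (F.coeff n)
      + St18.B3 v tt * (F.coeff (n + 1) * ((n + 1 : ℕ) : Polynomial (Polynomial K)))
      = if n = 0 then Polynomial.X ^ (v + 1) else 0 := by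
    intro n
    have h := congrArg (fun p => Polynomial.coeff p n) hmaster.symm
    simp only [St18.DA, Polynomial.coeff_add, St18.coeff_capp, Polynomial.coeff_C_mul,
      Polynomial.coeff_derivative, Polynomial.coeff_C] at h
    rw [← h]
    norm_cast
  exact (St18.final α β v tt htv hdeg' F hFn).elim
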